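/- For the operators A₀, B₀ ∈ B(H): (1) for every x ∈ H, the infimum over y ∈ H of ( Re⟨A₀y, y⟩ + Re⟨B₀(x − y), x − y⟩ ) equals 0 (that is, the parallel sum A₀ : B₀ = 0); and (2) there is no X ∈ B(H) such that X* ∘ A₀ ∘ X + (1 − X)* ∘ B₀ ∘ (1 − X) = 0. Consequently the equation A₀ : B₀ = X*A₀X + (1−X)*B₀(1−X) has no solution X ∈ B(H). -/

import Mathlib

open scoped ENNReal InnerProductSpace

noncomputable section

/-- The Hilbert space `ℓ²(ℕ, ℂ)`. -/
abbrev H₀ : Type := lp (fun _ : ℕ => ℂ) 2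

lemma norm_coeff_le (n : ℕ) : ‖((n : ℂ) + 1)⁻¹‖ ≤ 1 := by
  rw [norm_inv]
  rw [show ((n : ℂ) + 1) = ((n + 1 : ℕ) : ℂ) by push_cast; ring]
  rw [Complex.norm_natCast, inv_le_one_iff₀]
  right
  exact_mod_cast Nat.one_le_iff_ne_zero.mpr (Nat.succ_ne_zero n)

lemma memS (x : H₀) : Memℓp (fun n : ℕ => ((n : ℂ) + 1)⁻¹ * x n) 2 := by
  apply memℓp_gen
  have hx : Summable fun n => ‖x n‖ ^ (2 : ℝ≥0∞).toReal :=
    (lp.memℓp x).summable (by norm_num)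
  refine Summable.of_nonneg_of_le (fun n => Real.rpow_nonneg (norm_nonneg _) _)
    (fun n => ?_) hx
  apply Real.rpow_le_rpow (norm_nonneg _) ?_ (by norm_num)
  rw [norm_mul]
  calc ‖((n : ℂ) + 1)⁻¹‖ * ‖x n‖ ≤ 1 * ‖x n‖ :=
        mul_le_mul_of_nonneg_right (norm_coeff_le n) (norm_nonneg _)
    _ = ‖x n‖ := one_mul _

/-- The diagonal operator `(S x)ₙ = xₙ / (n + 1)` on `ℓ²(ℕ, ℂ)`. -/
def S : H₀ →L[ℂ] H₀ :=
  LinearMap.mkContinuous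
    { toFun := fun x => (⟨fun n : ℕ => ((n : ℂ) + 1)⁻¹ * x n, memS x⟩ : H₀)
      map_add' := fun x y => by
        apply lp.ext
        funext n
        show ((n : ℂ) + 1)⁻¹ * (x n + y n) = ((n : ℂ) + 1)⁻¹ * x n + ((n : ℂ) + 1)⁻¹ * y n
        ring
      map_smul' := fun c x => by
        apply lp.ext
        funext n
        show ((n : ℂ) + 1)⁻¹ * (c * x n) = c * (((n : ℂ) + 1)⁻¹ * x n)
        ring }
    1
    (fun x => by
      rw [one_mul]
      refine lp.norm_le_of_tsum_le (by norm_num) (norm_nonneg _) ?_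
      have hx2 : ‖x‖ ^ (2 : ℝ≥0∞).toReal = ∑' n, ‖x n‖ ^ (2 : ℝ≥0∞).toReal :=
        lp.norm_rpow_eq_tsum (by norm_num) x
      rw [hx2]
      refine Summable.tsum_le_tsum (fun n => ?_) ?_ ((lp.memℓp x).summable (by norm_num))
      · apply Real.rpow_le_rpow (norm_nonneg _) ?_ (by norm_num)
        show ‖((n : ℂ) + 1)⁻¹ * x n‖ ≤ ‖x n‖
        rw [norm_mul]
        calc ‖((n : ℂ) + 1)⁻¹‖ * ‖x n‖ ≤ 1 * ‖x n‖ :=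
              mul_le_mul_of_nonneg_right (norm_coeff_le n) (norm_nonneg _)
          _ = ‖x n‖ := one_mul _
      · exact (memS x).summable (by norm_num))

/-- The Hilbert space direct sum `H = ℓ²(ℕ, ℂ) ⊕ ℓ²(ℕ, ℂ)`. -/
abbrev H : Type := WithLp 2 (H₀ × H₀)

/-- The block operator `[[T₁₁, T₁₂],[T₂₁, T₂₂]]` on `H = H₀ ⊕ H₀`. -/
def block (T₁₁ T₁₂ T₂₁ T₂₂ : H₀ →L[ℂ] H₀) : H →L[ℂ] H :=
  ((WithLp.prodContinuousLinearEquiv 2 ℂ H₀ H₀).symm.toContinuousLinearMap.comp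
    ((T₁₁.comp (ContinuousLinearMap.fst ℂ H₀ H₀) +
        T₁₂.comp (ContinuousLinearMap.snd ℂ H₀ H₀)).prod
      (T₂₁.comp (ContinuousLinearMap.fst ℂ H₀ H₀) +
        T₂₂.comp (ContinuousLinearMap.snd ℂ H₀ H₀)))).comp
    (WithLp.prodContinuousLinearEquiv 2 ℂ H₀ H₀).toContinuousLinearMap

/-- The operator `A₀ = [[I, S],[S, S²]]` on `H`. -/
def A₀ : H →L[ℂ] H := block 1 S S (S * S)

/-- The operator `B₀ = [[I, 0],[0, 0]]` on `H`. -/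
def B₀ : H →L[ℂ] H := block 1 0 0 0

/-- `G = f(S)⁻¹` where `f(t) = √(t² + 2t + 2)`: the inverse of the positive square root
of `S² + 2S + 2I`. -/
def G : H₀ →L[ℂ] H₀ := Ring.inverse (@CFC.rpow (H₀ →L[ℂ] H₀) _ _ _ _ _ _
  IsSelfAdjoint.instContinuousFunctionalCalculus _ (S * S + 2 * S + 2) (1/2 : ℝ))

/-- The operator `R = [[G(S+2I), GS],[GS, GS(S+I)]]`, the positive square root of `A₀ + B₀`. -/
def R : H →L[ℂ] H := block (G * (S + 2)) (G * S) (G * S) (G * S * (S + 1))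

/-- The operator `X₀ = [[G(S+I), 0],[-G, 0]]`, the unique solution of `R X = B₀`. -/
def X₀ : H →L[ℂ] H := block (G * (S + 1)) 0 (-G) 0

lemma S_app (x : H₀) (n : ℕ) : S x n = ((n:ℂ)+1)⁻¹ * x n := rfl

lemma block_fst (T₁₁ T₁₂ T₂₁ T₂₂ : H₀ →L[ℂ] H₀) (z : H) :
    (block T₁₁ T₁₂ T₂₁ T₂₂ z).fst = T₁₁ z.fst + T₁₂ z.snd := rfl
lemma block_snd (T₁₁ T₁₂ T₂₁ T₂₂ : H₀ →L[ℂ] H₀) (z : H) :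
    (block T₁₁ T₁₂ T₂₁ T₂₂ z).snd = T₂₁ z.fst + T₂₂ z.snd := rfl

lemma conj_coeff (n : ℕ) : (starRingEnd ℂ) ((n:ℂ)+1)⁻¹ = ((n:ℂ)+1)⁻¹ := by
  rw [map_inv₀]
  congr 1
  rw [map_add, Complex.conj_natCast, map_one]

lemma S_symm (u v : H₀) : ⟪S u, v⟫_ℂ = ⟪u, S v⟫_ℂ := by
  rw [lp.inner_eq_tsum, lp.inner_eq_tsum]
  refine tsum_congr fun n => ?_
  simp only [RCLike.inner_apply, S_app, map_mul, conj_coeff]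
  ring

lemma qA (y : H) : (⟪A₀ y, y⟫_ℂ).re = ‖y.fst + S y.snd‖ ^ 2 := by
  have h1 : (A₀ y).fst = y.fst + S y.snd := by
    rw [A₀, block_fst]; rfl
  have h2 : (A₀ y).snd = S (y.fst + S y.snd) := by
    rw [A₀, block_snd, map_add]; rfl
  rw [WithLp.prod_inner_apply]
  change (⟪(A₀ y).fst, y.fst⟫_ℂ + ⟪(A₀ y).snd, y.snd⟫_ℂ).re = _
  rw [h1, h2, S_symm, ← inner_add_right]
  exact inner_self_eq_norm_sq (𝕜 := ℂ) _

lemma qB (w : H) : (⟪B₀ w, w⟫_ℂ).re = ‖w.fst‖ ^ 2 := by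
  have h1 : (B₀ w).fst = w.fst := by
    rw [B₀, block_fst]; simp
  have h2 : (B₀ w).snd = 0 := by
    rw [B₀, block_snd]; simp
  rw [WithLp.prod_inner_apply]
  change (⟪(B₀ w).fst, w.fst⟫_ℂ + ⟪(B₀ w).snd, w.snd⟫_ℂ).re = _
  rw [h1, h2, inner_zero_left, add_zero]
  exact inner_self_eq_norm_sq (𝕜 := ℂ) _
lemma S_single (n : ℕ) (c : ℂ) :
    S (lp.single 2 n c) = lp.single 2 n (((n:ℂ)+1)⁻¹ * c) := by
  apply lp.ext
  funext m
  by_cases h : m = n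
  · subst h
    rw [S_app, lp.single_apply_self, lp.single_apply_self]
  · rw [S_app, lp.single_apply_ne 2 n _ h, lp.single_apply_ne 2 n _ h, mul_zero]

lemma coeff_ne_zero (n : ℕ) : ((n:ℂ)+1) ≠ 0 := by
  exact Nat.cast_add_one_ne_zero n

lemma part1 (x : H) :
    (⨅ y : H, ((⟪A₀ y, y⟫_ℂ).re + (⟪B₀ (x - y), x - y⟫_ℂ).re)) = 0 := by
  set f : H → ℝ := fun y => ((⟪A₀ y, y⟫_ℂ).re + (⟪B₀ (x - y), x - y⟫_ℂ).re) with hf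
  have hnn : ∀ y, 0 ≤ f y := by
    intro y
    rw [hf]
    simp only [qA, qB]
    positivity
  have hbdd : BddBelow (Set.range f) := ⟨0, by rintro _ ⟨y, rfl⟩; exact hnn y⟩
  refine le_antisymm ?_ (le_ciInf hnn)
  refine le_of_forall_pos_le_add fun ε hε => ?_
  rw [zero_add]
  -- find a finite truncation
  have hsum : HasSum (fun n : ℕ => lp.single 2 n (x.fst n)) x.fst :=
    lp.hasSum_single ENNReal.ofNat_ne_top x.fst
  have h2 : Filter.Tendsto
      (fun s : Finset ℕ => ‖x.fst - ∑ n ∈ s, lp.single 2 n (x.fst n)‖ ^ 2)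
      Filter.atTop (nhds 0) := by
    have hT : Filter.Tendsto (fun s : Finset ℕ => x.fst - ∑ n ∈ s, lp.single 2 n (x.fst n))
        Filter.atTop (nhds (x.fst - x.fst)) := Filter.Tendsto.sub tendsto_const_nhds hsum
    have := (hT.norm).pow 2
    simpa using this
  obtain ⟨s, hs⟩ := (h2.eventually_lt_const hε).exists
  set v : H₀ := ∑ n ∈ s, lp.single 2 n (-((n:ℂ)+1) * x.fst n) with hv
  have hSv : S v = -∑ n ∈ s, lp.single 2 n (x.fst n) := by
    rw [hv, map_sum, ← Finset.sum_neg_distrib]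
    refine Finset.sum_congr rfl fun n _ => ?_
    rw [S_single, ← lp.single_neg]
    congr 1
    have hne := coeff_ne_zero n
    field_simp
  set y : H := (WithLp.equiv 2 (H₀ × H₀)).symm (x.fst, v) with hy
  have hy1 : y.fst = x.fst := rfl
  have hy2 : y.snd = v := rfl
  have hxy : (x - y).fst = x.fst - y.fst := rfl
  have hval : f y = ‖x.fst - ∑ n ∈ s, lp.single 2 n (x.fst n)‖ ^ 2 := by
    rw [hf]
    simp only [qA, qB, hy1, hy2, hxy, hSv, sub_self, norm_zero]
    rw [← sub_eq_add_neg]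
    norm_num
  calc (⨅ y : H, f y) ≤ f y := ciInf_le hbdd y
    _ ≤ ε := by rw [hval]; exact le_of_lt hs

lemma mem_a : Memℓp (fun n : ℕ => ((n:ℂ)+1)⁻¹) 2 := by
  apply memℓp_gen
  have key : ∀ n : ℕ, ‖((n:ℂ)+1)⁻¹‖ ^ (2 : ℝ≥0∞).toReal = 1 / ((n:ℝ)+1) ^ 2 := by
    intro n
    rw [show ((n : ℂ) + 1) = ((n + 1 : ℕ) : ℂ) by push_cast; ring, norm_inv,
      Complex.norm_natCast, show (2 : ℝ≥0∞).toReal = ((2:ℕ):ℝ) by norm_num,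
      Real.rpow_natCast]
    push_cast
    rw [one_div, inv_pow]
  rw [funext key]
  have h1 : Summable (fun n : ℕ => 1 / ((n:ℝ)) ^ 2) :=
    Real.summable_one_div_nat_pow.mpr one_lt_two
  have := (summable_nat_add_iff 1).mpr h1
  refine this.congr fun n => ?_
  push_cast
  ring
lemma part2 : ¬∃ X : H →L[ℂ] H,
    ((ContinuousLinearMap.adjoint X).comp A₀).comp X +
      ((ContinuousLinearMap.adjoint (1 - X)).comp B₀).comp (1 - X) = 0 := by
  rintro ⟨X, hX⟩
  set a : H₀ := ⟨fun n : ℕ => ((n:ℂ)+1)⁻¹, mem_a⟩ with ha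
  set z : H := (WithLp.equiv 2 (H₀ × H₀)).symm (a, 0) with hz
  have h0 : (⟪A₀ (X z), X z⟫_ℂ).re + (⟪B₀ ((1 - X) z), (1 - X) z⟫_ℂ).re = 0 := by
    have h := congrArg (fun T : H →L[ℂ] H => (⟪T z, z⟫_ℂ).re) hX
    simp only [ContinuousLinearMap.add_apply, ContinuousLinearMap.comp_apply,
      ContinuousLinearMap.zero_apply, inner_add_left, inner_zero_left,
      Complex.add_re, Complex.zero_re,
      ContinuousLinearMap.adjoint_inner_left] at h
    exact h
  rw [qA, qB] at h0
  have hA : ‖(X z).fst + S (X z).snd‖ ^ 2 = 0 := by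
    nlinarith [sq_nonneg ‖(X z).fst + S (X z).snd‖, sq_nonneg ‖((1 - X) z).fst‖]
  have hB : ‖((1 - X) z).fst‖ ^ 2 = 0 := by
    nlinarith [sq_nonneg ‖(X z).fst + S (X z).snd‖, sq_nonneg ‖((1 - X) z).fst‖]
  have hsub : ((1 - X) z).fst = a - (X z).fst := by
    rw [ContinuousLinearMap.sub_apply, ContinuousLinearMap.one_apply]
    rfl
  have hXz1 : (X z).fst = a := by
    have h1 := norm_eq_zero.mp (pow_eq_zero_iff two_ne_zero |>.mp hB)
    rw [hsub] at h1
    exact (sub_eq_zero.mp h1).symm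
  have hAz : a + S (X z).snd = 0 := by
    have h1 := norm_eq_zero.mp (pow_eq_zero_iff two_ne_zero |>.mp hA)
    rwa [hXz1] at h1
  set w : H₀ := (X z).snd with hw
  have hcoord : ∀ n : ℕ, w n = -1 := by
    intro n
    have h1 : (↑(a + S w) : ℕ → ℂ) n = 0 := by rw [hAz]; rfl
    rw [lp.coeFn_add] at h1
    have h2 : ((n:ℂ)+1)⁻¹ + ((n:ℂ)+1)⁻¹ * w n = 0 := h1
    have hne := coeff_ne_zero n
    have h3 : ((n:ℂ)+1)⁻¹ * (1 + w n) = 0 := by rw [mul_add, mul_one]; exact h2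
    rcases mul_eq_zero.mp h3 with h4 | h4
    · exact absurd h4 (inv_ne_zero hne)
    · linear_combination h4
  have hsummable := (lp.memℓp w).summable (p := 2) (by norm_num)
  have : Summable (fun _ : ℕ => (1:ℝ)) := by
    refine hsummable.congr fun n => ?_
    rw [hcoord n, norm_neg, norm_one, Real.one_rpow]
  simpa using (summable_const_iff (1:ℝ)).mp this


/-- Theorem 6.10: the parallel sum `A₀ : B₀` is zero (its quadratic form vanishes identically),
yet the equation `A₀ : B₀ = X* A₀ X + (1 - X)* B₀ (1 - X)` has no solution `X ∈ B(H)`. -/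
theorem parallel_sum_equation_unsolvable :
    (∀ x : H, (⨅ y : H, ((⟪A₀ y, y⟫_ℂ).re + (⟪B₀ (x - y), x - y⟫_ℂ).re)) = 0) ∧
    ¬∃ X : H →L[ℂ] H,
      ((ContinuousLinearMap.adjoint X).comp A₀).comp X +
        ((ContinuousLinearMap.adjoint (1 - X)).comp B₀).comp (1 - X) = 0 := by
  exact ⟨part1, part2⟩

end
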